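/- For every m×n complex matrix s, the linear map Ad_s ∘ t : M_m(ℂ) → M_n(ℂ) defined by x ↦ s* xᵀ s (where xᵀ is the transpose of x) is an exposed positive linear map. -/

import Mathlib

open Matrix ComplexOrder

noncomputable section

/-- A linear map between matrix algebras is positive if it sends positive
semidefinite matrices to positive semidefinite matrices. -/
def IsPosMap {m n : ℕ} (φ : Matrix (Fin m) (Fin m) ℂ →ₗ[ℂ] Matrix (Fin n) (Fin n) ℂ) : Prop :=
  ∀ a : Matrix (Fin m) (Fin m) ℂ, a.PosSemidef → (φ a).PosSemidef

/-- A positive linear map `φ` is exposed (generates an exposed ray of the cone of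
positive maps) if every positive map `ψ` such that `⟨η, φ(a) η⟩ = 0` implies
`⟨η, ψ(a) η⟩ = 0` (for `a` positive semidefinite) is a nonnegative multiple of `φ`. -/
def IsExposedMap {m n : ℕ} (φ : Matrix (Fin m) (Fin m) ℂ →ₗ[ℂ] Matrix (Fin n) (Fin n) ℂ) :
    Prop :=
  IsPosMap φ ∧
    ∀ ψ : Matrix (Fin m) (Fin m) ℂ →ₗ[ℂ] Matrix (Fin n) (Fin n) ℂ, IsPosMap ψ →
      (∀ a : Matrix (Fin m) (Fin m) ℂ, a.PosSemidef → ∀ η : Fin n → ℂ,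
        star η ⬝ᵥ (φ a) *ᵥ η = 0 → star η ⬝ᵥ (ψ a) *ᵥ η = 0) →
      ∃ c : ℝ, 0 ≤ c ∧ ψ = (c : ℂ) • φ

/-- The map `Ad_s : x ↦ s* x s`. -/
def adMap {m n : ℕ} (s : Matrix (Fin m) (Fin n) ℂ) :
    Matrix (Fin m) (Fin m) ℂ →ₗ[ℂ] Matrix (Fin n) (Fin n) ℂ where
  toFun x := sᴴ * x * s
  map_add' x y := by simp [Matrix.add_mul, Matrix.mul_add]
  map_smul' c x := by simp [Matrix.smul_mul, Matrix.mul_smul]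

/-- The transpose map on matrices, as a linear map. -/
def transposeLM (m : ℕ) : Matrix (Fin m) (Fin m) ℂ →ₗ[ℂ] Matrix (Fin m) (Fin m) ℂ where
  toFun x := xᵀ
  map_add' x y := Matrix.transpose_add x y
  map_smul' c x := by simp

namespace MarciniakAux

variable {k l : ℕ}

lemma star_dot_comm (a b : Fin k → ℂ) :
    star a ⬝ᵥ b = (starRingEnd ℂ) (star b ⬝ᵥ a) := by
  simp only [dotProduct, Pi.star_apply, map_sum, RCLike.star_def]
  congr 1; ext i
  rw [(starRingEnd ℂ).map_mul, Complex.conj_conj]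
  ring

lemma herm_swap {A : Matrix (Fin k) (Fin k) ℂ} (hA : A.IsHermitian) (a b : Fin k → ℂ) :
    star a ⬝ᵥ (A *ᵥ b) = (starRingEnd ℂ) (star b ⬝ᵥ (A *ᵥ a)) := by
  have hAe : ∀ i j, (starRingEnd ℂ) (A j i) = A i j := by
    intro i j
    have := congrFun (congrFun hA.eq i) j
    simpa [conjTranspose_apply] using this
  simp only [dotProduct, mulVec, Pi.star_apply, map_sum, Finset.mul_sum, RCLike.star_def]
  rw [Finset.sum_comm]
  congr 1; ext i; congr 1; ext j
  rw [(starRingEnd ℂ).map_mul, (starRingEnd ℂ).map_mul, Complex.conj_conj, hAe j i]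
  ring

lemma eq_of_mulVec {A B : Matrix (Fin k) (Fin k) ℂ} (h : ∀ x, A *ᵥ x = B *ᵥ x) : A = B := by
  ext i j
  have := congrFun (h (Pi.single j 1)) i
  simpa [mulVec_single] using this

lemma vmv_mulVec (w : Fin k → ℂ) (v : Fin k → ℂ) (x : Fin k → ℂ) :
    vecMulVec w v *ᵥ x = (v ⬝ᵥ x) • w := by
  ext i
  simp only [mulVec, dotProduct, vecMulVec_apply, Pi.smul_apply, smul_eq_mul, Finset.sum_mul]
  exact Finset.sum_congr rfl (fun j _ => by ring)

lemma real_of_nonneg {z : ℂ} (h : 0 ≤ z) : z = (z.re : ℂ) ∧ 0 ≤ z.re := by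
  obtain ⟨hre, him⟩ := Complex.nonneg_iff.mp h
  exact ⟨by apply Complex.ext <;> simp [← him], hre⟩

lemma psd_rankOne {A : Matrix (Fin k) (Fin k) ℂ} (hA : A.PosSemidef)
    {w : Fin k → ℂ} (hker : ∀ x, star w ⬝ᵥ x = 0 → A *ᵥ x = 0) :
    ∃ c : ℝ, 0 ≤ c ∧ A = (c : ℂ) • vecMulVec w (star w) := by
  by_cases hw : w = 0
  · refine ⟨0, le_refl _, ?_⟩
    have hA0 : A = 0 := eq_of_mulVec (fun x => by
      rw [hker x (by simp [hw]), Matrix.zero_mulVec])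
    rw [hA0]; simp
  · have hnw0 : star w ⬝ᵥ w ≠ 0 := fun h => hw (dotProduct_star_self_eq_zero.mp h)
    obtain ⟨hwr, hwre⟩ := real_of_nonneg (dotProduct_star_self_nonneg w)
    obtain ⟨hAr, hAre⟩ := real_of_nonneg (hA.dotProduct_mulVec_nonneg w)
    set t : ℝ := (star w ⬝ᵥ w).re with ht
    have ht0 : t ≠ 0 := fun h => hnw0 (by rw [hwr, h]; simp)
    set r : ℝ := (star w ⬝ᵥ (A *ᵥ w)).re with hr
    have hAw : A *ᵥ w = ((r/t : ℝ) : ℂ) • w := by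
      set μ : ℂ := ((r/t : ℝ) : ℂ) with hμ
      set ζ : Fin k → ℂ := A *ᵥ w - μ • w with hζ
      have hζw : star w ⬝ᵥ ζ = 0 := by
        rw [hζ, dotProduct_sub, dotProduct_smul, hAr, hwr, hμ, smul_eq_mul]
        push_cast
        field_simp
        ring
      have hAζ : A *ᵥ ζ = 0 := hker _ hζw
      have h1 : star ζ ⬝ᵥ (A *ᵥ w) = 0 := by
        rw [herm_swap hA.1 ζ w, hAζ]; simp
      have h3 : star ζ ⬝ᵥ w = 0 := by
        rw [star_dot_comm ζ w, hζw]; simp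
      have h2 : star ζ ⬝ᵥ ζ = 0 := by
        rw [hζ, dotProduct_sub, h1, dotProduct_smul, h3]
        simp
      have hz := dotProduct_star_self_eq_zero.mp h2
      rw [hζ, sub_eq_zero] at hz
      exact hz
    refine ⟨r / t^2, by positivity, ?_⟩
    apply eq_of_mulVec
    intro x
    set a : ℂ := (star w ⬝ᵥ x) / (t : ℂ) with ha
    have hx' : star w ⬝ᵥ (x - a • w) = 0 := by
      rw [dotProduct_sub, dotProduct_smul, ha, hwr, smul_eq_mul]
      field_simp
      ring
    have hAx' : A *ᵥ (x - a • w) = 0 := hker _ hx'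
    have hAx : A *ᵥ x = a • (A *ᵥ w) := by
      have hsub : A *ᵥ (x - a • w) = A *ᵥ x - a • (A *ᵥ w) := by
        rw [Matrix.mulVec_sub, Matrix.mulVec_smul]
      rw [hsub] at hAx'
      linear_combination (norm := module) hAx'
    rw [hAx, hAw, Matrix.smul_mulVec, vmv_mulVec, smul_smul, smul_smul, ha]
    congr 1
    push_cast
    field_simp

lemma psd_of_forall_nonneg (A : Matrix (Fin k) (Fin k) ℂ)
    (h : ∀ x, 0 ≤ star x ⬝ᵥ A *ᵥ x) : A.PosSemidef := by
  refine PosSemidef.of_dotProduct_mulVec_nonneg ?_ h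
  rw [Matrix.isHermitian_iff_isSymmetric]
  rw [LinearMap.isSymmetric_iff_inner_map_self_real]
  intro v
  set v' : Fin k → ℂ := (WithLp.equiv 2 (Fin k → ℂ)) v with hv'
  have hinner : (inner ℂ (Matrix.toEuclideanLin A v) v : ℂ) = star (A *ᵥ v') ⬝ᵥ v' := by
    rw [EuclideanSpace.inner_eq_star_dotProduct, dotProduct_comm]
    rfl
  have hsw : star (A *ᵥ v') ⬝ᵥ v' = (starRingEnd ℂ) (star v' ⬝ᵥ (A *ᵥ v')) :=
    star_dot_comm _ _
  obtain ⟨hre, him⟩ := Complex.nonneg_iff.mp (h v')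
  have hreal : (starRingEnd ℂ) (star v' ⬝ᵥ (A *ᵥ v')) = star v' ⬝ᵥ (A *ᵥ v') := by
    apply Complex.ext <;> simp [← him]
  rw [hinner, hsw, hreal]
  exact hreal

lemma polarization (u v : Fin k → ℂ) :
    vecMulVec u (star v) =
      (4⁻¹ : ℂ) • vecMulVec (u + v) (star (u + v))
      + (-4⁻¹ : ℂ) • vecMulVec (u - v) (star (u - v))
      + (Complex.I/4) • vecMulVec (u + Complex.I • v) (star (u + Complex.I • v))
      + (-(Complex.I/4)) • vecMulVec (u - Complex.I • v) (star (u - Complex.I • v)) := by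
  ext i j
  simp only [Matrix.add_apply, Matrix.smul_apply, vecMulVec_apply, Pi.add_apply, Pi.sub_apply,
    Pi.star_apply, Pi.smul_apply, smul_eq_mul, star_add, star_sub, star_mul', Complex.star_def,
    Complex.conj_I, _root_.map_add, _root_.map_sub, _root_.map_mul]
  ring_nf
  simp only [Complex.I_sq]
  ring

lemma matrix_decomp (x : Matrix (Fin k) (Fin k) ℂ) :
    x = ∑ p : Fin k × Fin k,
      x p.1 p.2 • vecMulVec (Pi.single p.1 1) (star (Pi.single p.2 (1:ℂ))) := by
  ext i j
  rw [Matrix.sum_apply]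
  simp [vecMulVec_apply, Pi.star_apply, Pi.single_apply, Matrix.smul_apply,
    Fintype.sum_prod_type, mul_ite, ite_mul, apply_ite (starRingEnd ℂ)]

lemma ext_of_rankOne {Φ Ψ : Matrix (Fin k) (Fin k) ℂ →ₗ[ℂ] Matrix (Fin l) (Fin l) ℂ}
    (h : ∀ v, Φ (vecMulVec v (star v)) = Ψ (vecMulVec v (star v))) : Φ = Ψ := by
  have h2 : ∀ u v, Φ (vecMulVec u (star v)) = Ψ (vecMulVec u (star v)) := by
    intro u v
    rw [polarization u v]
    simp only [_root_.map_add, _root_.map_smul, h]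
  apply LinearMap.ext
  intro x
  rw [matrix_decomp x, map_sum, map_sum]
  exact Finset.sum_congr rfl fun p _ => by rw [LinearMap.map_smul, LinearMap.map_smul, h2]

lemma exists_dual {w₁ w₂ : Fin l → ℂ}
    (hP : ∀ a b : ℂ, a • w₁ + b • w₂ = 0 → a = 0 ∧ b = 0) :
    ∃ x, star w₁ ⬝ᵥ x = 1 ∧ star w₂ ⬝ᵥ x = 0 := by
  set a : ℂ := star w₁ ⬝ᵥ w₁ with ha
  set b : ℂ := star w₁ ⬝ᵥ w₂ with hb
  set c : ℂ := star w₂ ⬝ᵥ w₁ with hc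
  set d : ℂ := star w₂ ⬝ᵥ w₂ with hd
  have hd0 : d ≠ 0 := by
    intro h
    have hw2 : w₂ = 0 := dotProduct_star_self_eq_zero.mp h
    have := hP 0 1 (by simp [hw2])
    exact one_ne_zero this.2
  have hD : a * d - b * c ≠ 0 := by
    intro hD0
    set z : Fin l → ℂ := d • w₁ - c • w₂ with hz
    have h1 : star w₁ ⬝ᵥ z = a * d - b * c := by
      rw [hz, dotProduct_sub, dotProduct_smul, dotProduct_smul, ← ha, ← hb]
      simp only [smul_eq_mul]; ring
    have h2 : star w₂ ⬝ᵥ z = 0 := by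
      rw [hz, dotProduct_sub, dotProduct_smul, dotProduct_smul, ← hc, ← hd]
      simp only [smul_eq_mul]; ring
    have h3 : star z ⬝ᵥ z = 0 := by
      have hsz : star z = star d • star w₁ - star c • star w₂ := by
        rw [hz, star_sub, star_smul, star_smul]
      rw [hsz, sub_dotProduct, smul_dotProduct, smul_dotProduct, h1, h2, hD0]
      simp
    have hz0 : z = 0 := dotProduct_star_self_eq_zero.mp h3
    rw [hz] at hz0
    have := hP d (-c) (by rw [neg_smul, ← sub_eq_add_neg]; exact hz0)
    exact hd0 this.1
  refine ⟨(a*d - b*c)⁻¹ • (d • w₁ - c • w₂), ?_, ?_⟩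
  · rw [dotProduct_smul, dotProduct_sub, dotProduct_smul, dotProduct_smul, ← ha, ← hb]
    field_simp
    rw [smul_eq_mul, smul_eq_mul, smul_eq_mul, one_div, inv_mul_eq_one₀ hD]
    ring
  · rw [dotProduct_smul, dotProduct_sub, dotProduct_smul, dotProduct_smul, ← hc, ← hd]
    field_simp
    ring

lemma abc_indep {w₁ w₂ : Fin l → ℂ}
    (hP : ∀ a b : ℂ, a • w₁ + b • w₂ = 0 → a = 0 ∧ b = 0)
    {a b c : ℂ}
    (h : a • vecMulVec w₁ (star w₁) + b • vecMulVec w₂ (star w₂)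
        + c • (vecMulVec w₁ (star w₂) + vecMulVec w₂ (star w₁)) = 0) :
    a = 0 ∧ b = 0 ∧ c = 0 := by
  have hP' : ∀ a b : ℂ, a • w₂ + b • w₁ = 0 → a = 0 ∧ b = 0 := by
    intro x y hxy
    have := hP y x (by rw [add_comm]; exact hxy)
    exact ⟨this.2, this.1⟩
  obtain ⟨x, hx1, hx2⟩ := exists_dual hP
  obtain ⟨y, hy1, hy2⟩ := exists_dual hP'
  have key : ∀ z : Fin l → ℂ,
      (a * (star w₁ ⬝ᵥ z)) • w₁ + (b * (star w₂ ⬝ᵥ z)) • w₂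
        + (c * (star w₂ ⬝ᵥ z)) • w₁ + (c * (star w₁ ⬝ᵥ z)) • w₂ = 0 := by
    intro z
    have := congrArg (fun M => M *ᵥ z) h
    simp only [Matrix.add_mulVec, Matrix.smul_mulVec, vmv_mulVec,
      Matrix.zero_mulVec] at this
    linear_combination (norm := module) this
  have k1 := key x
  rw [hx1, hx2] at k1
  simp only [mul_one, mul_zero, zero_smul, add_zero, zero_add] at k1
  have hac : a = 0 ∧ c = 0 := hP a c (by linear_combination (norm := module) k1)
  have k2 := key y
  rw [hy1, hy2] at k2
  simp only [mul_one, mul_zero, zero_smul, add_zero, zero_add] at k2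
  have hbc : b = 0 ∧ c = 0 := hP' b c (by linear_combination (norm := module) k2)
  exact ⟨hac.1, hbc.1, hac.2⟩

lemma vmv_exp1 (a b : Fin k → ℂ) :
    vecMulVec (a+b) (star (a+b)) = vecMulVec a (star a) + vecMulVec b (star b)
      + (vecMulVec a (star b) + vecMulVec b (star a)) := by
  ext i j
  simp only [Matrix.add_apply, vecMulVec_apply, Pi.add_apply, Pi.star_apply, star_add]
  ring

lemma vmv_exp2 (a b : Fin k → ℂ) :
    vecMulVec (a+(2:ℂ)•b) (star (a+(2:ℂ)•b)) = vecMulVec a (star a)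
      + (4:ℂ) • vecMulVec b (star b)
      + (2:ℂ) • (vecMulVec a (star b) + vecMulVec b (star a)) := by
  ext i j
  simp only [Matrix.add_apply, Matrix.smul_apply, vecMulVec_apply, Pi.add_apply, Pi.smul_apply,
    smul_eq_mul]
  have h2 : star (2 : ℂ) = 2 := by
    apply Complex.ext <;> simp
  simp only [star_add, star_smul, Pi.add_apply, Pi.smul_apply, h2, smul_eq_mul]
  ring

lemma pair_solve {x y : Fin l → ℂ} {a b : ℂ} (h : a • x + b • y = 0) (hb : b ≠ 0) :
    y = (-(a/b)) • x := by
  have hby : b • y = -(a • x) := by linear_combination (norm := module) h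
  have h2 : b • ((-(a/b)) • x) = -(a • x) := by
    rw [smul_smul, ← neg_smul]
    congr 1
    field_simp
  exact smul_right_injective _ hb (hby.trans h2.symm)

end MarciniakAux

open MarciniakAux

/-- (Marciniak) For every `m × n` complex matrix `s`, the map
`Ad_s ∘ t : x ↦ s* xᵀ s` generates an exposed ray of the cone of positive linear
maps from `M_m(ℂ)` to `M_n(ℂ)`. -/
theorem adMap_comp_transpose_isExposed (m n : ℕ) (s : Matrix (Fin m) (Fin n) ℂ) :
    IsExposedMap ((adMap s).comp (transposeLM m)) := by
  classical
  set φ : Matrix (Fin m) (Fin m) ℂ →ₗ[ℂ] Matrix (Fin n) (Fin n) ℂ :=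
    (adMap s).comp (transposeLM m) with hφdef
  have hφ_apply : ∀ x, φ x = sᴴ * xᵀ * s := fun x => rfl
  constructor
  · intro a ha
    rw [hφ_apply]
    exact ha.transpose.conjTranspose_mul_mul_same s
  intro ψ hψ hvan
  set w : (Fin m → ℂ) → (Fin n → ℂ) := fun v => sᴴ *ᵥ (star v) with hwdef
  -- φ on rank-one matrices
  have hφ_rank1 : ∀ v, φ (vecMulVec v (star v)) = vecMulVec (w v) (star (w v)) := by
    intro v
    rw [hφ_apply]
    ext i j
    simp only [Matrix.mul_apply, Matrix.transpose_apply, vecMulVec_apply,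
      Matrix.conjTranspose_apply, Pi.star_apply, hwdef, mulVec, dotProduct, map_sum,
      RCLike.star_def, _root_.map_mul, Complex.conj_conj, Finset.sum_mul, Finset.mul_sum]
    congr 1; ext p; congr 1; ext q
    ring
  -- rank-one matrices are PSD
  have hvmv_psd : ∀ (v : Fin m → ℂ), (vecMulVec v (star v)).PosSemidef := by
    intro v
    apply psd_of_forall_nonneg
    intro x
    rw [vmv_mulVec, dotProduct_smul, star_dot_comm x v, smul_eq_mul, Complex.mul_conj]
    exact Complex.zero_le_real.mpr (Complex.normSq_nonneg _)
  have hM : ∀ v, (ψ (vecMulVec v (star v))).PosSemidef := fun v => hψ _ (hvmv_psd v)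
  -- kernel property
  have hker : ∀ v x, star (w v) ⬝ᵥ x = 0 → ψ (vecMulVec v (star v)) *ᵥ x = 0 := by
    intro v x hx
    have hφ0 : star x ⬝ᵥ φ (vecMulVec v (star v)) *ᵥ x = 0 := by
      rw [hφ_rank1, vmv_mulVec, dotProduct_smul, hx]
      simp
    have := hvan _ (hvmv_psd v) x hφ0
    exact ((hM v).dotProduct_mulVec_zero_iff x).mp this
  have hex : ∀ v, ∃ c : ℝ, 0 ≤ c ∧
      ψ (vecMulVec v (star v)) = (c : ℂ) • vecMulVec (w v) (star (w v)) :=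
    fun v => psd_rankOne (hM v) (hker v)
  set lam : (Fin m → ℂ) → ℝ := fun v => (hex v).choose with hlamdef
  have hlam0 : ∀ v, 0 ≤ lam v := fun v => (hex v).choose_spec.1
  have hlam : ∀ v, ψ (vecMulVec v (star v))
      = ((lam v : ℝ) : ℂ) • vecMulVec (w v) (star (w v)) :=
    fun v => (hex v).choose_spec.2
  -- additivity of w
  have hw_add : ∀ u v, w (u + v) = w u + w v := by
    intro u v
    simp only [hwdef, star_add, Matrix.mulVec_add]
  have hw_smul2 : ∀ u v, w (u + (2:ℂ) • v) = w u + (2:ℂ) • w v := by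
    intro u v
    have h2 : star (2 : ℂ) = 2 := by apply Complex.ext <;> simp
    simp only [hwdef, star_add, star_smul, h2, Matrix.mulVec_add, Matrix.mulVec_smul]
  -- main claim: uniform constant
  have main : ∃ c : ℝ, 0 ≤ c ∧ ∀ v, ψ (vecMulVec v (star v))
      = (c : ℂ) • vecMulVec (w v) (star (w v)) := by
    by_cases hall : ∀ v, w v = 0
    · refine ⟨0, le_refl _, fun v => ?_⟩
      rw [hlam v, hall v]
      ext i j
      simp [vecMulVec_apply]
    push_neg at hall
    obtain ⟨v₀, hv₀⟩ := hall
    have hw₀dot : star (w v₀) ⬝ᵥ (w v₀) ≠ 0 :=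
      fun h => hv₀ (dotProduct_star_self_eq_zero.mp h)
    by_cases hone : ∀ v, ∃ μ : ℂ, w v = μ • w v₀
    · -- rank-one case: sesquilinear form argument
      set w₀ : Fin n → ℂ := w v₀ with hw₀
      set z₀ : Fin m → ℂ := star (s *ᵥ w₀) with hz₀
      set E : Fin m → Fin m → Matrix (Fin m) (Fin m) ℂ :=
        fun a b => vecMulVec (Pi.single a 1) (star (Pi.single b (1:ℂ))) with hE
      set N : Matrix (Fin m) (Fin m) ℂ :=
        fun i j => star w₀ ⬝ᵥ (ψ (E j i)) *ᵥ w₀ with hN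
      set Flin : Matrix (Fin n) (Fin n) ℂ →ₗ[ℂ] ℂ :=
        { toFun := fun M => star w₀ ⬝ᵥ M *ᵥ w₀
          map_add' := fun x y => by
            simp only [Matrix.add_mulVec, dotProduct_add]
          map_smul' := fun c x => by
            simp only [Matrix.smul_mulVec, dotProduct_smul, RingHom.id_apply,
              smul_eq_mul] } with hFlin
      have hγ : ∀ v, star z₀ ⬝ᵥ v = star (w v) ⬝ᵥ w₀ := by
        intro v
        simp only [hz₀, hwdef, star_star, dotProduct, mulVec, Pi.star_apply, map_sum,
          Matrix.conjTranspose_apply, RCLike.star_def, _root_.map_mul, Complex.conj_conj,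
          Finset.sum_mul, Finset.mul_sum]
        rw [Finset.sum_comm]
        congr 1; ext p; congr 1; ext q
        ring
      have hq : ∀ v, star v ⬝ᵥ N *ᵥ v = Flin (ψ (vecMulVec v (star v))) := by
        intro v
        conv_rhs => rw [matrix_decomp (vecMulVec v (star v))]
        rw [map_sum, map_sum]
        simp only [LinearMap.map_smul, smul_eq_mul]
        rw [Fintype.sum_prod_type]
        simp only [dotProduct, mulVec, Finset.mul_sum, hN, vecMulVec_apply, Pi.star_apply,
          LinearMap.coe_mk, AddHom.coe_mk]
        rw [Finset.sum_comm]
        congr 1; ext p; congr 1; ext q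
        simp only [hFlin, LinearMap.coe_mk, AddHom.coe_mk, dotProduct, mulVec,
          Pi.star_apply, Finset.mul_sum, Finset.sum_mul]
        congr 1; ext x
        congr 1; ext y
        ring
      have hNpsd : N.PosSemidef := by
        apply psd_of_forall_nonneg
        intro x
        rw [hq x]
        exact (hM x).dotProduct_mulVec_nonneg w₀
      have hNker : ∀ x, star z₀ ⬝ᵥ x = 0 → N *ᵥ x = 0 := by
        intro x hx
        obtain ⟨μ, hμ⟩ := hone x
        have hwx : w x = 0 := by
          rw [hγ x, hμ, star_smul, smul_dotProduct] at hx
          have hμ0 : star μ = 0 := by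
            rcases smul_eq_zero.mp hx with h | h
            · exact h
            · exact absurd h hw₀dot
          rw [hμ, show μ = 0 from by simpa using congrArg star hμ0, zero_smul]
        have hψ0 : ψ (vecMulVec x (star x)) = 0 := by
          rw [hlam x, hwx]
          ext i j
          simp [vecMulVec_apply]
        have hq0 : star x ⬝ᵥ N *ᵥ x = 0 := by rw [hq x, hψ0, map_zero]
        exact (hNpsd.dotProduct_mulVec_zero_iff x).mp hq0
      obtain ⟨ρ, hρ0, hNeq⟩ := psd_rankOne hNpsd hNker
      refine ⟨ρ, hρ0, fun v => ?_⟩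
      by_cases hwv : w v = 0
      · rw [hlam v, hwv]
        ext i j
        simp [vecMulVec_apply]
      · obtain ⟨μ, hμ⟩ := hone v
        have hμ0 : μ ≠ 0 := fun h => hwv (by rw [hμ, h, zero_smul])
        set γ : ℂ := star (w v) ⬝ᵥ w₀ with hγv
        have hγ0 : γ ≠ 0 := by
          rw [hγv, hμ, star_smul, smul_dotProduct, smul_eq_mul]
          exact mul_ne_zero (star_ne_zero.mpr hμ0) hw₀dot
        have e1 : Flin (ψ (vecMulVec v (star v)))
            = ((lam v : ℝ) : ℂ) * (γ * (starRingEnd ℂ) γ) := by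
          rw [hlam v, LinearMap.map_smul]
          have : Flin (vecMulVec (w v) (star (w v))) = γ * (starRingEnd ℂ) γ := by
            show star w₀ ⬝ᵥ (vecMulVec (w v) (star (w v))) *ᵥ w₀ = _
            rw [vmv_mulVec, dotProduct_smul, ← hγv, star_dot_comm w₀ (w v), ← hγv]
            simp only [smul_eq_mul]
          rw [this, smul_eq_mul]
        have e2 : star v ⬝ᵥ N *ᵥ v = (ρ : ℂ) * (γ * (starRingEnd ℂ) γ) := by
          rw [hNeq, Matrix.smul_mulVec, vmv_mulVec, hγ v, ← hγv,
            dotProduct_smul, dotProduct_smul, star_dot_comm v z₀, hγ v, ← hγv]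
          simp only [smul_eq_mul]
        have hcancel : ((lam v : ℝ) : ℂ) = (ρ : ℂ) := by
          have hne : γ * (starRingEnd ℂ) γ ≠ 0 :=
            mul_ne_zero hγ0 (fun h => hγ0 (by simpa using congrArg star h))
          apply mul_right_cancel₀ hne
          rw [← e1, ← e2, hq v]
        rw [hlam v, hcancel]
    · -- generic case
      push_neg at hone
      obtain ⟨v₁, hv₁⟩ := hone
      have hP01 : ∀ a b : ℂ, a • w v₀ + b • w v₁ = 0 → a = 0 ∧ b = 0 := by
        intro a b hab
        by_cases hb : b = 0
        · subst hb
          simp only [zero_smul, add_zero] at hab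
          exact ⟨(smul_eq_zero.mp hab).resolve_right hv₀, rfl⟩
        · exact absurd (pair_solve hab hb) (hv₁ _)
      have lemL : ∀ u v : Fin m → ℂ,
          (∀ a b : ℂ, a • w u + b • w v = 0 → a = 0 ∧ b = 0) → lam u = lam v := by
        intro u v hP
        set Au := vecMulVec (w u) (star (w u)) with hAu
        set Bv := vecMulVec (w v) (star (w v)) with hBv
        set Cm := vecMulVec (w u) (star (w v)) + vecMulVec (w v) (star (w u)) with hCm
        set Cd := vecMulVec u (star v) + vecMulVec v (star u) with hCd
        have E1 : ((lam (u+v) : ℝ) : ℂ) • (Au + Bv + Cm)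
            = ((lam u : ℝ) : ℂ) • Au + ((lam v : ℝ) : ℂ) • Bv + ψ Cd := by
          have h1 := hlam (u + v)
          rw [hw_add u v, vmv_exp1 (w u) (w v), vmv_exp1 u v, map_add, map_add,
            hlam u, hlam v] at h1
          rw [← hAu, ← hBv, ← hCm, ← hCd] at h1
          linear_combination (norm := module) -h1
        have E2 : ((lam (u+(2:ℂ)•v) : ℝ) : ℂ) • (Au + (4:ℂ) • Bv + (2:ℂ) • Cm)
            = ((lam u : ℝ) : ℂ) • Au + ((4:ℂ) * ((lam v : ℝ) : ℂ)) • Bv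
              + (2:ℂ) • ψ Cd := by
          have h1 := hlam (u + (2:ℂ) • v)
          rw [hw_smul2 u v, vmv_exp2 (w u) (w v), vmv_exp2 u v, map_add, map_add,
            LinearMap.map_smul, LinearMap.map_smul, hlam u, hlam v] at h1
          rw [← hAu, ← hBv, ← hCm, ← hCd] at h1
          linear_combination (norm := module) -h1
        have key : (((lam (u+(2:ℂ)•v) : ℝ) : ℂ) - 2*((lam (u+v) : ℝ) : ℂ) + ((lam u : ℝ) : ℂ)) • Au
            + ((4:ℂ)*((lam (u+(2:ℂ)•v) : ℝ) : ℂ) - 2*((lam (u+v) : ℝ) : ℂ) - 2*((lam v : ℝ) : ℂ)) • Bv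
            + ((2:ℂ)*((lam (u+(2:ℂ)•v) : ℝ) : ℂ) - 2*((lam (u+v) : ℝ) : ℂ)) • Cm = 0 := by
          linear_combination (norm := module) E2 - (2:ℂ) • E1
        obtain ⟨ha, hb, hc⟩ := abc_indep hP key
        have hc' : lam (u+(2:ℂ)•v) = lam (u+v) := by
          have : ((lam (u+(2:ℂ)•v) : ℝ) : ℂ) = ((lam (u+v) : ℝ) : ℂ) := by
            linear_combination hc / 2
          exact_mod_cast this
        have ha' : lam u = lam (u+v) := by
          have : ((lam u : ℝ) : ℂ) = ((lam (u+v) : ℝ) : ℂ) := by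
            rw [hc'] at ha
            linear_combination ha
          exact_mod_cast this
        have hb' : lam v = lam (u+v) := by
          have : ((lam v : ℝ) : ℂ) = ((lam (u+v) : ℝ) : ℂ) := by
            rw [hc'] at hb
            linear_combination -hb / 2
          exact_mod_cast this
        rw [ha', hb']
      refine ⟨lam v₀, hlam0 v₀, fun v => ?_⟩
      by_cases hwv : w v = 0
      · rw [hlam v, hwv]
        ext i j
        simp [vecMulVec_apply]
      · by_cases hPv : ∀ a b : ℂ, a • w v₀ + b • w v = 0 → a = 0 ∧ b = 0
        · rw [hlam v, lemL v₀ v hPv]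
        · push_neg at hPv
          obtain ⟨a, b, hab, hne⟩ := hPv
          have hb : b ≠ 0 := by
            intro hb0
            subst hb0
            simp only [zero_smul, add_zero] at hab
            exact hne ((smul_eq_zero.mp hab).resolve_right hv₀) rfl
          have hμ : w v = (-(a/b)) • w v₀ := pair_solve hab hb
          have hμ0 : (-(a/b)) ≠ 0 := fun h => hwv (by rw [hμ, h, zero_smul])
          have hPvv₁ : ∀ a' b' : ℂ, a' • w v + b' • w v₁ = 0 → a' = 0 ∧ b' = 0 := by
            intro a' b' h'
            rw [hμ, smul_smul] at h'
            by_cases hb' : b' = 0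
            · subst hb'
              simp only [zero_smul, add_zero] at h'
              have := (smul_eq_zero.mp h').resolve_right hv₀
              exact ⟨(mul_eq_zero.mp this).resolve_right hμ0, rfl⟩
            · exact absurd (pair_solve h' hb') (hv₁ _)
          have l1 : lam v₀ = lam v₁ := lemL v₀ v₁ hP01
          have l2 : lam v = lam v₁ := lemL v v₁ hPvv₁
          rw [hlam v, l2, ← l1]
  obtain ⟨c, hc0, hcall⟩ := main
  refine ⟨c, hc0, ?_⟩
  apply ext_of_rankOne
  intro v
  rw [hcall v, LinearMap.smul_apply, hφ_rank1 v]



end
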